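/- For t < 0 and any z with |z| ≤ 1, the one-step two-point average of g satisfies the identity-based bound: |(1+δ)/2 · g(s+1-δ, t+1) + (1-δ)/2 · g(s-1-δ, t+1) - g(s,t) + (δ²/2) g''(s, t+1)| ≤ C(|t+1|^{-3/2} + |t+1|^{-2}) for all s ∈ ℝ, t ≤ -2, δ ∈ [0,1], where g(s,t) = (1/√π)∫_{s/√(-2t)}^∞ e^{-x²}dx and C is an absolute constant. -/

import Mathlib

open Real MeasureTheory

noncomputable def g (s t : ℝ) : ℝ :=
  (1 / Real.sqrt π) * ∫ x in Set.Ioi (s / Real.sqrt (-2 * t)), Real.exp (-x ^ 2)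

noncomputable def I0 (u : ℝ) : ℝ := ∫ x in Set.Ioi u, Real.exp (-x ^ 2)

lemma integrable_gauss : Integrable (fun x : ℝ => Real.exp (-x ^ 2)) := by
  have := integrable_exp_neg_mul_sq (b := 1) one_pos
  simpa using this

lemma I0_eq (u : ℝ) : I0 u = (∫ x : ℝ, Real.exp (-x ^ 2)) - (∫ x in Set.Iic u, Real.exp (-x ^ 2)) := by
  rw [← intervalIntegral.integral_Iic_add_Ioi (b := u) integrable_gauss.integrableOn integrable_gauss.integrableOn]
  simp [I0]

lemma hasDerivAt_I0 (u : ℝ) : HasDerivAt I0 (-Real.exp (-u ^ 2)) u := by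
  have h1 : ∀ v : ℝ, I0 v = ((∫ x : ℝ, Real.exp (-x ^ 2)) - (∫ x in Set.Iic (0:ℝ), Real.exp (-x ^ 2))) - ∫ x in (0:ℝ)..v, Real.exp (-x ^ 2) := by
    intro v
    rw [I0_eq]
    have := intervalIntegral.integral_Iic_sub_Iic (f := fun x : ℝ => Real.exp (-x ^ 2)) (μ := volume) (a := (0:ℝ)) (b := v) integrable_gauss.integrableOn integrable_gauss.integrableOn
    linarith [this]
  have hd : HasDerivAt (fun v => ∫ x in (0:ℝ)..v, Real.exp (-x ^ 2)) (Real.exp (-u ^ 2)) u := by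
    apply intervalIntegral.integral_hasDerivAt_right
      integrable_gauss.intervalIntegrable
      integrable_gauss.1.stronglyMeasurableAtFilter
    exact (Real.continuous_exp.comp (by continuity)).continuousAt
  have := (hasDerivAt_const u ((∫ x : ℝ, Real.exp (-x ^ 2)) - (∫ x in Set.Iic (0:ℝ), Real.exp (-x ^ 2)))).sub hd
  rw [show I0 = _ from funext h1]
  exact this.congr_deriv (by ring)

noncomputable def w (t : ℝ) : ℝ := (Real.sqrt (-2 * t))⁻¹

noncomputable def g1 (t s : ℝ) : ℝ := -(1 / Real.sqrt π) * w t * Real.exp (-(s * w t) ^ 2)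
noncomputable def g2 (t s : ℝ) : ℝ :=
  (2 / Real.sqrt π) * (w t) ^ 2 * (s * w t) * Real.exp (-(s * w t) ^ 2)
noncomputable def g3 (t s : ℝ) : ℝ :=
  -(1 / Real.sqrt π) * (w t) ^ 3 * (4 * (s * w t) ^ 2 - 2) * Real.exp (-(s * w t) ^ 2)
noncomputable def gt' (t s : ℝ) : ℝ := -(1 / Real.sqrt π) * s * (w t) ^ 3 * Real.exp (-(s * w t) ^ 2)
noncomputable def gtt (t s : ℝ) : ℝ :=
  -(1 / Real.sqrt π) * (w t) ^ 4 * (3 * (s * w t) - 2 * (s * w t) ^ 3) * Real.exp (-(s * w t) ^ 2)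

lemma g_eq (s t : ℝ) : g s t = (1 / Real.sqrt π) * I0 (s * w t) := by
  simp only [g, I0, w, div_eq_mul_inv]

lemma pde (t s : ℝ) : gt' t s = -(1 / 2) * g2 t s := by
  unfold gt' g2; ring

lemma hasDerivAt_exp_gauss (c x : ℝ) :
    HasDerivAt (fun y : ℝ => Real.exp (-(y * c) ^ 2)) (-2 * (x * c) * c * Real.exp (-(x * c) ^ 2)) x := by
  have h1 : HasDerivAt (fun y : ℝ => -(y * c) ^ 2) (-2 * (x * c) * c) x := by
    have h : HasDerivAt (fun y : ℝ => y * c) c x := by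
      simpa using (hasDerivAt_id x).mul_const c
    exact ((h.pow 2).neg).congr_deriv (by simp)
  exact ((Real.hasDerivAt_exp _).comp x h1).congr_deriv (by ring)

lemma hasDerivAt_g_s (t s : ℝ) : HasDerivAt (fun s' => g s' t) (g1 t s) s := by
  have h1 : HasDerivAt (fun s' : ℝ => s' * w t) (w t) s := by
    simpa using (hasDerivAt_id s).mul_const (w t)
  have h2 := ((hasDerivAt_I0 (s * w t)).comp s h1).const_mul (1 / Real.sqrt π)
  have : (fun s' => g s' t) = fun s' => (1 / Real.sqrt π) * I0 (s' * w t) := by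
    funext s'; exact g_eq s' t
  rw [this]
  exact h2.congr_deriv (by rw [g1]; ring)

lemma hasDerivAt_g1 (t s : ℝ) : HasDerivAt (fun s' => g1 t s') (g2 t s) s := by
  have h := (hasDerivAt_exp_gauss (w t) s).const_mul (-(1 / Real.sqrt π) * w t)
  exact h.congr_deriv (by rw [g2]; ring)

lemma hasDerivAt_g2 (t s : ℝ) : HasDerivAt (fun s' => g2 t s') (g3 t s) s := by
  have he := hasDerivAt_exp_gauss (w t) s
  have hl : HasDerivAt (fun s' : ℝ => (2 / Real.sqrt π) * (w t) ^ 2 * (s' * w t))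
      ((2 / Real.sqrt π) * (w t) ^ 2 * w t) s := by
    have h : HasDerivAt (fun s' : ℝ => s' * w t) (w t) s := by
      simpa using (hasDerivAt_id s).mul_const (w t)
    simpa using h.const_mul ((2 / Real.sqrt π) * (w t) ^ 2)
  have := hl.mul he
  exact this.congr_deriv (by rw [g3]; ring)

lemma hasDerivAt_exp_gauss' (c x : ℝ) :
    HasDerivAt (fun y : ℝ => Real.exp (-(c * y) ^ 2)) (-2 * (c * x) * c * Real.exp (-(c * x) ^ 2)) x := by
  have h1 : HasDerivAt (fun y : ℝ => -(c * y) ^ 2) (-2 * (c * x) * c) x := by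
    have h : HasDerivAt (fun y : ℝ => c * y) c x := by
      simpa using (hasDerivAt_id x).const_mul c
    exact ((h.pow 2).neg).congr_deriv (by simp)
  exact ((Real.hasDerivAt_exp _).comp x h1).congr_deriv (by ring)

lemma sqrt_neg_pos {t : ℝ} (ht : t < 0) : 0 < Real.sqrt (-2 * t) :=
  Real.sqrt_pos.2 (by linarith)

lemma w_pos {t : ℝ} (ht : t < 0) : 0 < w t := inv_pos.2 (sqrt_neg_pos ht)

lemma hasDerivAt_w {t : ℝ} (ht : t < 0) : HasDerivAt w ((w t) ^ 3) t := by
  have hs : Real.sqrt (-2 * t) ≠ 0 := (sqrt_neg_pos ht).ne'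
  have h1 : HasDerivAt (fun τ : ℝ => -2 * τ) (-2) t := by
    simpa using (hasDerivAt_id t).const_mul (-2 : ℝ)
  have h2 : HasDerivAt (fun τ : ℝ => Real.sqrt (-2 * τ))
      (1 / (2 * Real.sqrt (-2 * t)) * (-2)) t :=
    (Real.hasDerivAt_sqrt (by nlinarith : (-2 : ℝ) * t ≠ 0)).comp t h1
  have h3 := h2.inv hs
  refine h3.congr_deriv ?_
  rw [w]
  have hsq : Real.sqrt (-2 * t) ^ 2 = -2 * t := Real.sq_sqrt (by linarith)
  have hb : (0:ℝ) < Real.sqrt (-2 * t) := sqrt_neg_pos ht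
  field_simp

lemma hasDerivAt_g_t {t : ℝ} (ht : t < 0) (s : ℝ) :
    HasDerivAt (fun τ => g s τ) (gt' t s) t := by
  have hw := hasDerivAt_w ht
  have h1 : HasDerivAt (fun τ : ℝ => s * w τ) (s * (w t) ^ 3) t := hw.const_mul s
  have h2 := ((hasDerivAt_I0 (s * w t)).comp t h1).const_mul (1 / Real.sqrt π)
  have he : (fun τ => g s τ) = fun τ => (1 / Real.sqrt π) * I0 (s * w τ) := by
    funext τ; exact g_eq s τ
  rw [he]
  exact h2.congr_deriv (by rw [gt']; ring)

lemma hasDerivAt_gt {t : ℝ} (ht : t < 0) (s : ℝ) :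
    HasDerivAt (fun τ => gt' τ s) (gtt t s) t := by
  have hw := hasDerivAt_w ht
  have hcomp : HasDerivAt (fun τ => Real.exp (-(s * w τ) ^ 2))
      (-2 * (s * w t) * s * Real.exp (-(s * w t) ^ 2) * (w t) ^ 3) t :=
    (hasDerivAt_exp_gauss' s (w t)).comp t hw
  have hp : HasDerivAt (fun τ => (w τ) ^ 3) (3 * (w t) ^ 2 * (w t) ^ 3) t := by
    exact (hw.pow 3).congr_deriv (by norm_num)
  have hm := (hp.mul hcomp).const_mul (-(1 / Real.sqrt π) * s)
  have he : (fun τ => gt' τ s)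
      = fun τ => (-(1 / Real.sqrt π) * s) * ((w τ) ^ 3 * Real.exp (-(s * w τ) ^ 2)) := by
    funext τ; rw [gt']; ring
  rw [he]
  exact hm.congr_deriv (by rw [gtt]; ring)

lemma sqrtpi_ge_one : (1 : ℝ) ≤ Real.sqrt π := by
  rw [show (1:ℝ) = Real.sqrt 1 by simp]
  exact Real.sqrt_le_sqrt (by linarith [Real.pi_gt_three])

lemma inv_sqrtpi_le_one : (1 / Real.sqrt π) ≤ 1 := by
  rw [div_le_one (by linarith [sqrtpi_ge_one])]; exact sqrtpi_ge_one

lemma aux_v1 {v : ℝ} (hv : 0 ≤ v) : v * Real.exp (-v ^ 2) ≤ 1 := by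
  rw [Real.exp_neg, ← div_eq_mul_inv, div_le_one (Real.exp_pos _)]
  nlinarith [Real.add_one_le_exp (v ^ 2), sq_nonneg (v - 1)]

lemma aux_v2 {v : ℝ} : v ^ 2 * Real.exp (-v ^ 2) ≤ 1 := by
  rw [Real.exp_neg, ← div_eq_mul_inv, div_le_one (Real.exp_pos _)]
  nlinarith [Real.add_one_le_exp (v ^ 2)]

lemma aux_v3 {v : ℝ} (hv : 0 ≤ v) : v ^ 3 * Real.exp (-v ^ 2) ≤ 2 := by
  rw [Real.exp_neg, ← div_eq_mul_inv, div_le_iff₀ (Real.exp_pos _)]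
  have h1 : Real.exp (v ^ 2 / 2) * Real.exp (v ^ 2 / 2) = Real.exp (v ^ 2) := by
    rw [← Real.exp_add]; ring_nf
  nlinarith [Real.add_one_le_exp (v ^ 2 / 2), sq_nonneg (v * (v - 1)), sq_nonneg v,
    Real.exp_pos (v ^ 2 / 2)]

lemma exp_neg_sq_le_one (u : ℝ) : Real.exp (-u ^ 2) ≤ 1 :=
  Real.exp_le_one_iff.mpr (by nlinarith [sq_nonneg u])

lemma w_nonneg (t : ℝ) : 0 ≤ w t := inv_nonneg.2 (Real.sqrt_nonneg _)

lemma abs_g3_le (t s : ℝ) : |g3 t s| ≤ 6 * (w t) ^ 3 := by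
  set u := s * w t with hu
  have heq : g3 t s = (-(1 / Real.sqrt π) * (w t) ^ 3) * ((4 * u ^ 2 - 2) * Real.exp (-u ^ 2)) := by
    rw [g3]; ring
  rw [heq, abs_mul]
  have h1 : |(-(1 / Real.sqrt π) * (w t) ^ 3)| ≤ (w t) ^ 3 := by
    rw [abs_mul, abs_neg, abs_of_nonneg (div_nonneg zero_le_one (Real.sqrt_nonneg _)),
      abs_of_nonneg (pow_nonneg (w_nonneg t) 3)]
    nlinarith [inv_sqrtpi_le_one, pow_nonneg (w_nonneg t) 3]
  have h2 : |(4 * u ^ 2 - 2) * Real.exp (-u ^ 2)| ≤ 6 := by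
    rw [abs_mul, abs_of_pos (Real.exp_pos _)]
    have h3 : |4 * u ^ 2 - 2| ≤ 4 * u ^ 2 + 2 := by
      rw [abs_le]; constructor <;> nlinarith [sq_nonneg u]
    nlinarith [aux_v2 (v := u), exp_neg_sq_le_one u, Real.exp_pos (-u ^ 2),
      abs_nonneg (4 * u ^ 2 - 2)]
  calc |(-(1 / Real.sqrt π) * (w t) ^ 3)| * |(4 * u ^ 2 - 2) * Real.exp (-u ^ 2)|
      ≤ (w t) ^ 3 * 6 := mul_le_mul h1 h2 (abs_nonneg _) (pow_nonneg (w_nonneg t) 3)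
    _ = 6 * (w t) ^ 3 := by ring

lemma abs_gtt_le (t s : ℝ) : |gtt t s| ≤ 7 * (w t) ^ 4 := by
  set u := s * w t with hu
  have heq : gtt t s = (-(1 / Real.sqrt π) * (w t) ^ 4) * ((3 * u - 2 * u ^ 3) * Real.exp (-u ^ 2)) := by
    rw [gtt]; ring
  rw [heq, abs_mul]
  have h1 : |(-(1 / Real.sqrt π) * (w t) ^ 4)| ≤ (w t) ^ 4 := by
    rw [abs_mul, abs_neg, abs_of_nonneg (div_nonneg zero_le_one (Real.sqrt_nonneg _)),
      abs_of_nonneg (pow_nonneg (w_nonneg t) 4)]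
    nlinarith [inv_sqrtpi_le_one, pow_nonneg (w_nonneg t) 4]
  have h2 : |(3 * u - 2 * u ^ 3) * Real.exp (-u ^ 2)| ≤ 7 := by
    rw [abs_mul, abs_of_pos (Real.exp_pos _)]
    have h3 : |3 * u - 2 * u ^ 3| ≤ 3 * |u| + 2 * |u| ^ 3 := by
      have hp : |u ^ 3| = |u| ^ 3 := abs_pow u 3
      rw [abs_le]
      constructor <;>
        nlinarith [le_abs_self u, neg_abs_le u, le_abs_self (u ^ 3), neg_abs_le (u ^ 3)]
    have h4 : |u| * Real.exp (-u ^ 2) ≤ 1 := by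
      have := aux_v1 (abs_nonneg u)
      rwa [sq_abs] at this
    have h5 : |u| ^ 3 * Real.exp (-u ^ 2) ≤ 2 := by
      have := aux_v3 (abs_nonneg u)
      rwa [sq_abs] at this
    nlinarith [Real.exp_pos (-u ^ 2), abs_nonneg u, abs_nonneg (3 * u - 2 * u ^ 3)]
  calc |(-(1 / Real.sqrt π) * (w t) ^ 4)| * |(3 * u - 2 * u ^ 3) * Real.exp (-u ^ 2)|
      ≤ (w t) ^ 4 * 7 := mul_le_mul h1 h2 (abs_nonneg _) (pow_nonneg (w_nonneg t) 4)
    _ = 7 * (w t) ^ 4 := by ring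

lemma mvt_g2 (t x y : ℝ) : |g2 t x - g2 t y| ≤ (6 * (w t) ^ 3) * |x - y| := by
  have := Convex.norm_image_sub_le_of_norm_hasDerivWithin_le
    (f := g2 t) (f' := g3 t) (C := 6 * (w t) ^ 3) (s := Set.univ)
    (fun z _ => (hasDerivAt_g2 t z).hasDerivWithinAt)
    (fun z _ => by simpa [Real.norm_eq_abs] using abs_g3_le t z)
    convex_univ (Set.mem_univ y) (Set.mem_univ x)
  simpa [Real.norm_eq_abs] using this

lemma taylor2_bound (t s h : ℝ) (hh : |h| ≤ 2) :
    |g (s + h) t - g s t - h * g1 t s - h ^ 2 / 2 * g2 t s| ≤ 8 * (6 * (w t) ^ 3) := by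
  set M : ℝ := 6 * (w t) ^ 3 with hM
  have hM0 : 0 ≤ M := by
    have := pow_nonneg (w_nonneg t) 3; simp only [hM]; linarith
  set R' : ℝ → ℝ := fun x => g1 t (s + x) - g1 t s - x * g2 t s with hR'def
  have hR'deriv : ∀ x : ℝ, HasDerivAt R' (g2 t (s + x) - g2 t s) x := by
    intro x
    have h1 : HasDerivAt (fun x' : ℝ => g1 t (s + x')) (g2 t (s + x)) x := by
      have hi : HasDerivAt (fun x' : ℝ => s + x') 1 x := by
        simpa using (hasDerivAt_id x).const_add s
      exact ((hasDerivAt_g1 t (s + x)).comp x hi).congr_deriv (by ring)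
    have h2 : HasDerivAt (fun x' : ℝ => x' * g2 t s) (g2 t s) x := by
      simpa using (hasDerivAt_id x).mul_const (g2 t s)
    exact (h1.sub_const (g1 t s)).sub h2
  -- bound for R' on Icc (-2) 2
  have hR'bound : ∀ x ∈ Set.Icc (-2:ℝ) 2, |R' x| ≤ 4 * M := by
    intro x hx
    have hmv := Convex.norm_image_sub_le_of_norm_hasDerivWithin_le
      (f := R') (f' := fun x => g2 t (s + x) - g2 t s) (C := 2 * M) (s := Set.Icc (-2:ℝ) 2)
      (fun z hz => (hR'deriv z).hasDerivWithinAt)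
      (fun z hz => by
        have := mvt_g2 t (s + z) s
        have hz2 : |z| ≤ 2 := abs_le.mpr ⟨hz.1, hz.2⟩
        simp only [Real.norm_eq_abs]
        calc |g2 t (s + z) - g2 t s| ≤ M * |s + z - s| := this
          _ = M * |z| := by ring_nf
          _ ≤ 2 * M := by nlinarith [abs_nonneg z])
      (convex_Icc _ _) (show (0:ℝ) ∈ Set.Icc (-2:ℝ) 2 by norm_num) hx
    have hR'0 : R' 0 = 0 := by simp [hR'def]
    rw [hR'0, sub_zero] at hmv
    have : |x - 0| ≤ 2 := by simpa using abs_le.mpr ⟨hx.1, hx.2⟩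
    simp only [Real.norm_eq_abs] at hmv
    calc |R' x| ≤ 2 * M * |x - 0| := hmv
      _ ≤ 4 * M := by nlinarith [abs_nonneg (x - 0)]
  -- now R
  set R : ℝ → ℝ := fun x => g (s + x) t - g s t - x * g1 t s - x ^ 2 / 2 * g2 t s with hRdef
  have hRderiv : ∀ x : ℝ, HasDerivAt R (R' x) x := by
    intro x
    have hi : HasDerivAt (fun x' : ℝ => s + x') 1 x := by
      simpa using (hasDerivAt_id x).const_add s
    have h1 : HasDerivAt (fun x' : ℝ => g (s + x') t) (g1 t (s + x)) x := by
      exact ((hasDerivAt_g_s t (s + x)).comp x hi).congr_deriv (by ring)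
    have h2 : HasDerivAt (fun x' : ℝ => x' * g1 t s) (g1 t s) x := by
      simpa using (hasDerivAt_id x).mul_const (g1 t s)
    have h3 : HasDerivAt (fun x' : ℝ => x' ^ 2 / 2 * g2 t s) (x * g2 t s) x := by
      have := ((hasDerivAt_pow 2 x).div_const 2).mul_const (g2 t s)
      exact this.congr_deriv (by ring)
    exact (((h1.sub_const (g s t)).sub h2).sub h3).congr_deriv (by simp [hR'def])
  have hmv2 := Convex.norm_image_sub_le_of_norm_hasDerivWithin_le
    (f := R) (f' := R') (C := 4 * M) (s := Set.Icc (-2:ℝ) 2)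
    (fun z hz => (hRderiv z).hasDerivWithinAt)
    (fun z hz => by simpa [Real.norm_eq_abs] using hR'bound z hz)
    (convex_Icc _ _) (show (0:ℝ) ∈ Set.Icc (-2:ℝ) 2 by norm_num)
    (show h ∈ Set.Icc (-2:ℝ) 2 from
      Set.mem_Icc.mpr ⟨(abs_le.mp hh).1, (abs_le.mp hh).2⟩)
  have hR0 : R 0 = 0 := by simp [hRdef]
  rw [hR0, sub_zero] at hmv2
  simp only [Real.norm_eq_abs, sub_zero] at hmv2
  have : |R h| ≤ 4 * M * 2 := le_trans hmv2 (by nlinarith [abs_nonneg h])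
  calc |g (s + h) t - g s t - h * g1 t s - h ^ 2 / 2 * g2 t s| = |R h| := by rw [hRdef]
    _ ≤ 8 * M := by linarith

lemma w_mono {τ t : ℝ} (hτ : τ ≤ t) (ht : t < 0) : w τ ≤ w t := by
  rw [w, w]
  exact inv_anti₀ (sqrt_neg_pos ht) (Real.sqrt_le_sqrt (by linarith))

lemma time_taylor_bound {t : ℝ} (ht1 : t + 1 < 0) (s : ℝ) :
    |g s t - g s (t + 1) + gt' (t + 1) s| ≤ 7 * (w (t + 1)) ^ 4 := by
  set M : ℝ := 7 * (w (t + 1)) ^ 4 with hMdef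
  have hM0 : 0 ≤ M := by
    have := pow_nonneg (w_nonneg (t + 1)) 4; simp only [hMdef]; linarith
  have hgttb : ∀ τ ∈ Set.Icc t (t + 1), |gtt τ s| ≤ M := by
    intro τ hτ
    have hτ0 : τ < 0 := lt_of_le_of_lt hτ.2 ht1
    calc |gtt τ s| ≤ 7 * (w τ) ^ 4 := abs_gtt_le τ s
      _ ≤ M := by
        have := pow_le_pow_left₀ (w_nonneg τ) (w_mono hτ.2 ht1) 4
        simp only [hMdef]; linarith
  -- MVT for gt' on the interval
  have hgt'lip : ∀ x ∈ Set.Icc t (t + 1), |gt' x s - gt' (t + 1) s| ≤ M := by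
    intro x hx
    have hmv := Convex.norm_image_sub_le_of_norm_hasDerivWithin_le
      (f := fun τ => gt' τ s) (f' := fun τ => gtt τ s) (C := M) (s := Set.Icc t (t + 1))
      (fun z hz => (hasDerivAt_gt (lt_of_le_of_lt hz.2 ht1) s).hasDerivWithinAt)
      (fun z hz => by simpa [Real.norm_eq_abs] using hgttb z hz)
      (convex_Icc _ _) (show t + 1 ∈ Set.Icc t (t + 1) by constructor <;> linarith) hx
    simp only [Real.norm_eq_abs] at hmv
    have hd : |x - (t + 1)| ≤ 1 := abs_le.mpr ⟨by linarith [hx.1], by linarith [hx.2]⟩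
    calc |gt' x s - gt' (t + 1) s| ≤ M * |x - (t + 1)| := hmv
      _ ≤ M := by nlinarith [abs_nonneg (x - (t + 1))]
  set T : ℝ → ℝ := fun τ => g s τ - g s (t + 1) - (τ - (t + 1)) * gt' (t + 1) s with hTdef
  have hTderiv : ∀ τ, τ < 0 → HasDerivAt T (gt' τ s - gt' (t + 1) s) τ := by
    intro τ hτ0
    have h1 := hasDerivAt_g_t hτ0 s
    have h2 : HasDerivAt (fun τ' : ℝ => (τ' - (t + 1)) * gt' (t + 1) s) (gt' (t + 1) s) τ := by
      simpa using ((hasDerivAt_id τ).sub_const (t + 1)).mul_const (gt' (t + 1) s)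
    exact (h1.sub_const (g s (t + 1))).sub h2
  have hmv2 := Convex.norm_image_sub_le_of_norm_hasDerivWithin_le
    (f := T) (f' := fun τ => gt' τ s - gt' (t + 1) s) (C := M) (s := Set.Icc t (t + 1))
    (fun z hz => (hTderiv z (lt_of_le_of_lt hz.2 ht1)).hasDerivWithinAt)
    (fun z hz => by simpa [Real.norm_eq_abs] using hgt'lip z hz)
    (convex_Icc _ _) (show t + 1 ∈ Set.Icc t (t + 1) by constructor <;> linarith)
    (show t ∈ Set.Icc t (t + 1) by constructor <;> linarith)
  have hT1 : T (t + 1) = 0 := by simp [hTdef]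
  rw [hT1, sub_zero] at hmv2
  simp only [Real.norm_eq_abs] at hmv2
  have hTt : T t = g s t - g s (t + 1) + gt' (t + 1) s := by
    simp only [hTdef]; ring
  have hd2 : |t - (t + 1)| = 1 := by rw [show t - (t + 1) = -1 by ring]; norm_num
  rw [hTt, hd2] at hmv2
  linarith [hmv2]

lemma inv_sqrt_rpow {x : ℝ} (h0 : 0 ≤ x) (n : ℕ) :
    ((Real.sqrt x)⁻¹) ^ n = x ^ (-(n : ℝ) / 2) := by
  have e1 : (Real.sqrt x)⁻¹ = x ^ (-(1 : ℝ) / 2) := by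
    rw [Real.sqrt_eq_rpow, ← Real.rpow_neg h0]; norm_num
  rw [e1, ← Real.rpow_natCast (x ^ (-(1 : ℝ) / 2)) n, ← Real.rpow_mul h0]
  congr 1; ring

set_option maxHeartbeats 1000000 in
/-- One-step two-point average bound: there is an absolute constant `C` such that for all
`s ∈ ℝ`, `t ≤ -2`, `δ ∈ [0,1]`,
`|(1+δ)/2·g(s+1-δ,t+1) + (1-δ)/2·g(s-1-δ,t+1) - g(s,t) + (δ²/2)g''(s,t+1)|
  ≤ C(|t+1|^{-3/2} + |t+1|^{-2})`. -/
theorem stmt_17 :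
    ∃ C > (0 : ℝ), ∀ s t δ : ℝ, t ≤ -2 → 0 ≤ δ → δ ≤ 1 →
      |(1 + δ) / 2 * g (s + 1 - δ) (t + 1) + (1 - δ) / 2 * g (s - 1 - δ) (t + 1)
          - g s t + δ ^ 2 / 2 * iteratedDeriv 2 (fun s' => g s' (t + 1)) s|
        ≤ C * (|t + 1| ^ (-(3 : ℝ) / 2) + |t + 1| ^ (-(2 : ℝ))) := by
  refine ⟨200, by norm_num, fun s t δ ht hδ0 hδ1 => ?_⟩
  have ht1 : t + 1 < 0 := by linarith
  have hiter : iteratedDeriv 2 (fun s' => g s' (t + 1)) s = g2 (t + 1) s := by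
    rw [iteratedDeriv_succ, iteratedDeriv_one]
    have hd : deriv (fun s' => g s' (t + 1)) = g1 (t + 1) :=
      funext fun x => (hasDerivAt_g_s (t + 1) x).deriv
    rw [hd]
    exact (hasDerivAt_g1 (t + 1) s).deriv
  rw [hiter]
  set A : ℝ := g (s + (1 - δ)) (t + 1) - g s (t + 1) - (1 - δ) * g1 (t + 1) s
      - (1 - δ) ^ 2 / 2 * g2 (t + 1) s with hAdef
  set B : ℝ := g (s + (-1 - δ)) (t + 1) - g s (t + 1) - (-1 - δ) * g1 (t + 1) s
      - (-1 - δ) ^ 2 / 2 * g2 (t + 1) s with hBdef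
  set T : ℝ := g s t - g s (t + 1) + gt' (t + 1) s with hTdef
  have hA : |A| ≤ 8 * (6 * (w (t + 1)) ^ 3) :=
    taylor2_bound (t + 1) s (1 - δ) (abs_le.mpr ⟨by linarith, by linarith⟩)
  have hB : |B| ≤ 8 * (6 * (w (t + 1)) ^ 3) :=
    taylor2_bound (t + 1) s (-1 - δ) (abs_le.mpr ⟨by linarith, by linarith⟩)
  have hT : |T| ≤ 7 * (w (t + 1)) ^ 4 := time_taylor_bound ht1 s
  have harg1 : s + (1 - δ) = s + 1 - δ := by ring
  have harg2 : s + (-1 - δ) = s - 1 - δ := by ring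
  have key : (1 + δ) / 2 * g (s + 1 - δ) (t + 1) + (1 - δ) / 2 * g (s - 1 - δ) (t + 1)
      - g s t + δ ^ 2 / 2 * g2 (t + 1) s
      = (1 + δ) / 2 * A + (1 - δ) / 2 * B - T := by
    rw [hAdef, hBdef, hTdef, pde (t + 1) s, harg1, harg2]
    ring
  rw [key]
  have habs3 : |(1 + δ) / 2 * A + (1 - δ) / 2 * B - T| ≤ |A| + |B| + |T| := by
    have h1 : |(1 + δ) / 2 * A| ≤ |A| := by
      rw [abs_mul, abs_of_nonneg (by linarith : (0:ℝ) ≤ (1 + δ) / 2)]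
      nlinarith [abs_nonneg A]
    have h2 : |(1 - δ) / 2 * B| ≤ |B| := by
      rw [abs_mul, abs_of_nonneg (by linarith : (0:ℝ) ≤ (1 - δ) / 2)]
      nlinarith [abs_nonneg B]
    calc |(1 + δ) / 2 * A + (1 - δ) / 2 * B - T|
        ≤ |(1 + δ) / 2 * A + (1 - δ) / 2 * B| + |T| := by
          rw [sub_eq_add_neg]
          exact (abs_add_le _ _).trans (by rw [abs_neg])
      _ ≤ |(1 + δ) / 2 * A| + |(1 - δ) / 2 * B| + |T| := by
          linarith [abs_add_le ((1 + δ) / 2 * A) ((1 - δ) / 2 * B)]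
      _ ≤ |A| + |B| + |T| := by linarith
  -- convert w (t+1) powers to rpow of |t+1|
  have habs : |t + 1| = -(t + 1) := abs_of_neg ht1
  have habspos : (0 : ℝ) < |t + 1| := abs_pos.2 (ne_of_lt ht1)
  have h7 : w (t + 1) ≤ (Real.sqrt |t + 1|)⁻¹ := by
    rw [w]
    exact inv_anti₀ (Real.sqrt_pos.2 habspos)
      (Real.sqrt_le_sqrt (by rw [habs]; linarith))
  have hw3 : (w (t + 1)) ^ 3 ≤ |t + 1| ^ (-(3 : ℝ) / 2) := by
    calc (w (t + 1)) ^ 3 ≤ ((Real.sqrt |t + 1|)⁻¹) ^ 3 :=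
          pow_le_pow_left₀ (w_nonneg _) h7 3
      _ = |t + 1| ^ (-(3 : ℝ) / 2) := by
          rw [inv_sqrt_rpow (abs_nonneg _) 3]; norm_num
  have hw4 : (w (t + 1)) ^ 4 ≤ |t + 1| ^ (-(2 : ℝ)) := by
    calc (w (t + 1)) ^ 4 ≤ ((Real.sqrt |t + 1|)⁻¹) ^ 4 :=
          pow_le_pow_left₀ (w_nonneg _) h7 4
      _ = |t + 1| ^ (-(2 : ℝ)) := by
          rw [inv_sqrt_rpow (abs_nonneg _) 4]; norm_num
  calc |(1 + δ) / 2 * A + (1 - δ) / 2 * B - T| ≤ |A| + |B| + |T| := habs3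
    _ ≤ 96 * (w (t + 1)) ^ 3 + 7 * (w (t + 1)) ^ 4 := by linarith
    _ ≤ 96 * |t + 1| ^ (-(3 : ℝ) / 2) + 7 * |t + 1| ^ (-(2 : ℝ)) := by nlinarith [hw3, hw4]
    _ ≤ 200 * (|t + 1| ^ (-(3 : ℝ) / 2) + |t + 1| ^ (-(2 : ℝ))) := by
        nlinarith [Real.rpow_nonneg (abs_nonneg (t + 1)) (-(3 : ℝ) / 2),
          Real.rpow_nonneg (abs_nonneg (t + 1)) (-(2 : ℝ))]
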